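/- For a fixed kernel P and two policies π, π' with max total variation distance δ₂ = max_s D_TV(π'(·|s), π(·|s)), discount γ∈[0,1), and rewards bounded by r_max: |V^{P,π'}(s_t) - V^{P,π}(s_t)| ≤ min( 2 r_max δ₂ (tγ(1-γ)+1)/(1-γ)², 2 r_max/(1-γ) ) for any state s_t at time t. -/

import Mathlib

open scoped BigOperators

variable {S A : Type*}

/-- `P` is a transition kernel: for each state-action pair, a probability
distribution over next states. -/
def IsKernel [Fintype S] (P : S → A → S → ℝ) : Prop :=
  ∀ s a, (∀ s', 0 ≤ P s a s') ∧ ∑ s', P s a s' = 1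

/-- `π` is a stochastic policy: for each state, a probability distribution over actions. -/
def IsPolicy [Fintype A] (π : S → A → ℝ) : Prop :=
  ∀ s, (∀ a, 0 ≤ π s a) ∧ ∑ a, π s a = 1

/-- `ρ` is a probability distribution over states. -/
def IsDist [Fintype S] (ρ : S → ℝ) : Prop :=
  (∀ s, 0 ≤ ρ s) ∧ ∑ s, ρ s = 1

/-- One step of the state-marginal evolution under kernel `P` and policy `π`. -/
noncomputable def stepMarginal [Fintype S] [Fintype A]
    (P : S → A → S → ℝ) (π : S → A → ℝ) (μ : S → ℝ) : S → ℝ :=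
  fun s' => ∑ s, μ s * ∑ a, π s a * P s a s'

/-- The time-`t` state marginal under kernel `P`, policy `π`, initial distribution `ρ`. -/
noncomputable def marginal [Fintype S] [Fintype A]
    (P : S → A → S → ℝ) (π : S → A → ℝ) (ρ : S → ℝ) : ℕ → S → ℝ
  | 0 => ρ
  | t + 1 => stepMarginal P π (marginal P π ρ t)

/-- Expected one-step reward when the current state is distributed according to `μ`. -/
noncomputable def expReward [Fintype S] [Fintype A]
    (P : S → A → S → ℝ) (π : S → A → ℝ) (r : S → A → S → ℝ) (μ : S → ℝ) : ℝ :=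
  ∑ s, μ s * ∑ a, π s a * ∑ s', P s a s' * r s a s'

/-- The expected discounted return `J(P, π)` with initial distribution `ρ`. -/
noncomputable def Jret [Fintype S] [Fintype A]
    (P : S → A → S → ℝ) (π : S → A → ℝ) (r : S → A → S → ℝ) (γ : ℝ) (ρ : S → ℝ) : ℝ :=
  ∑' t : ℕ, γ ^ t * expReward P π r (marginal P π ρ t)

/-- The value function `V^{P,π}(s)`: the return starting from state `s`. -/
noncomputable def Vval [Fintype S] [Fintype A] [DecidableEq S]
    (P : S → A → S → ℝ) (π : S → A → ℝ) (r : S → A → S → ℝ) (γ : ℝ) (s : S) : ℝ :=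
  Jret P π r γ (fun s' => if s' = s then 1 else 0)

/-- The state-action value function `Q^{P,π}(s,a)`. -/
noncomputable def Qval [Fintype S] [Fintype A] [DecidableEq S]
    (P : S → A → S → ℝ) (π : S → A → ℝ) (r : S → A → S → ℝ) (γ : ℝ) (s : S) (a : A) : ℝ :=
  ∑ s', P s a s' * (r s a s' + γ * Vval P π r γ s')

/-- The advantage function `A^{P,π}(s,a) = Q^{P,π}(s,a) - V^{P,π}(s)`. -/
noncomputable def Aval [Fintype S] [Fintype A] [DecidableEq S]
    (P : S → A → S → ℝ) (π : S → A → ℝ) (r : S → A → S → ℝ) (γ : ℝ) (s : S) (a : A) : ℝ :=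
  Qval P π r γ s a - Vval P π r γ s

section AuxLemmas

lemma abs_weighted_le {ι : Type*} [Fintype ι] {w x : ι → ℝ} {c : ℝ}
    (hw : ∀ i, 0 ≤ w i) (hw1 : ∑ i, w i = 1) (hx : ∀ i, |x i| ≤ c) :
    |∑ i, w i * x i| ≤ c := by
  calc |∑ i, w i * x i| ≤ ∑ i, |w i * x i| := Finset.abs_sum_le_sum_abs _ _
    _ ≤ ∑ i, w i * c := by
        refine Finset.sum_le_sum fun i _ => ?_
        rw [abs_mul, abs_of_nonneg (hw i)]
        exact mul_le_mul_of_nonneg_left (hx i) (hw i)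
    _ = c := by rw [← Finset.sum_mul, hw1, one_mul]

variable [Fintype S] [Fintype A]

lemma isDist_marginal {P : S → A → S → ℝ} {π : S → A → ℝ} {ρ : S → ℝ}
    (hP : IsKernel P) (hπ : IsPolicy π) (hρ : IsDist ρ) :
    ∀ t, IsDist (marginal P π ρ t) := by
  intro t
  induction t with
  | zero => exact hρ
  | succ t ih =>
    constructor
    · intro s'
      refine Finset.sum_nonneg fun s _ => mul_nonneg (ih.1 s) ?_
      exact Finset.sum_nonneg fun a _ => mul_nonneg ((hπ s).1 a) ((hP s a).1 s')
    · show ∑ s', ∑ s, marginal P π ρ t s * ∑ a, π s a * P s a s' = 1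
      rw [Finset.sum_comm]
      have h1 : ∀ s, ∑ s', marginal P π ρ t s * ∑ a, π s a * P s a s'
          = marginal P π ρ t s := by
        intro s
        rw [← Finset.mul_sum, Finset.sum_comm]
        have h2 : ∀ a, ∑ s', π s a * P s a s' = π s a := by
          intro a; rw [← Finset.mul_sum, (hP s a).2, mul_one]
        simp_rw [h2, (hπ s).2, mul_one]
      simp_rw [h1, ih.2]

lemma l1_marginal {P : S → A → S → ℝ} {π π' : S → A → ℝ} {ρ : S → ℝ} {δ₂ : ℝ}
    (hP : IsKernel P) (hπ : IsPolicy π) (hπ' : IsPolicy π') (hρ : IsDist ρ)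
    (hδ2 : ∀ s, ∑ a, |π' s a - π s a| ≤ 2 * δ₂) :
    ∀ t, ∑ s, |marginal P π' ρ t s - marginal P π ρ t s| ≤ 2 * t * δ₂ := by
  intro t
  induction t with
  | zero => simp [marginal]
  | succ t ih =>
    set μ := marginal P π ρ t with hμdef
    set μ' := marginal P π' ρ t with hμ'def
    have hμD : IsDist μ := isDist_marginal hP hπ hρ t
    have key : ∀ s', marginal P π' ρ (t+1) s' - marginal P π ρ (t+1) s' =
        ∑ s, ((μ' s - μ s) * ∑ a, π' s a * P s a s'
          + μ s * ∑ a, (π' s a - π s a) * P s a s') := by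
      intro s'
      show (∑ s, μ' s * ∑ a, π' s a * P s a s') - (∑ s, μ s * ∑ a, π s a * P s a s') = _
      rw [← Finset.sum_sub_distrib]
      refine Finset.sum_congr rfl fun x _ => ?_
      have h2 : ∑ a, (π' x a - π x a) * P x a s'
          = (∑ a, π' x a * P x a s') - ∑ a, π x a * P x a s' := by
        rw [← Finset.sum_sub_distrib]; exact Finset.sum_congr rfl fun a _ => by ring
      rw [h2]; ring
    calc ∑ s', |marginal P π' ρ (t+1) s' - marginal P π ρ (t+1) s'|
        ≤ ∑ s', ∑ s, (|μ' s - μ s| * ∑ a, π' s a * P s a s'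
            + μ s * ∑ a, |π' s a - π s a| * P s a s') := by
          refine Finset.sum_le_sum fun s' _ => ?_
          rw [key s']
          refine le_trans (Finset.abs_sum_le_sum_abs _ _) (Finset.sum_le_sum fun x _ => ?_)
          refine le_trans (abs_add_le _ _) (add_le_add ?_ ?_)
          · rw [abs_mul]
            refine mul_le_mul_of_nonneg_left ?_ (abs_nonneg _)
            rw [abs_of_nonneg]
            exact Finset.sum_nonneg fun a _ => mul_nonneg ((hπ' x).1 a) ((hP x a).1 s')
          · rw [abs_mul, abs_of_nonneg (hμD.1 x)]
            refine mul_le_mul_of_nonneg_left ?_ (hμD.1 x)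
            refine le_trans (Finset.abs_sum_le_sum_abs _ _) (Finset.sum_le_sum fun a _ => ?_)
            rw [abs_mul, abs_of_nonneg ((hP x a).1 s')]
      _ = (∑ s, |μ' s - μ s|) + ∑ s, μ s * ∑ a, |π' s a - π s a| := by
          rw [Finset.sum_comm]
          simp only [Finset.sum_add_distrib]
          congr 1
          · refine Finset.sum_congr rfl fun x _ => ?_
            rw [← Finset.mul_sum, Finset.sum_comm]
            have h2 : ∀ a, ∑ s', π' x a * P x a s' = π' x a := by
              intro a; rw [← Finset.mul_sum, (hP x a).2, mul_one]
            simp_rw [h2, (hπ' x).2, mul_one]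
          · refine Finset.sum_congr rfl fun x _ => ?_
            rw [← Finset.mul_sum, Finset.sum_comm]
            congr 1
            have h2 : ∀ a, ∑ s', |π' x a - π x a| * P x a s' = |π' x a - π x a| := by
              intro a; rw [← Finset.mul_sum, (hP x a).2, mul_one]
            simp_rw [h2]
      _ ≤ 2 * t * δ₂ + 2 * δ₂ := by
          refine add_le_add ih ?_
          calc ∑ s, μ s * ∑ a, |π' s a - π s a| ≤ ∑ s, μ s * (2 * δ₂) := by
                refine Finset.sum_le_sum fun x _ => ?_
                exact mul_le_mul_of_nonneg_left (hδ2 x) (hμD.1 x)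
            _ = 2 * δ₂ := by rw [← Finset.sum_mul, hμD.2, one_mul]
      _ = 2 * (t+1 : ℕ) * δ₂ := by push_cast; ring

lemma expReward_abs_le {P : S → A → S → ℝ} {π : S → A → ℝ} {r : S → A → S → ℝ}
    {μ : S → ℝ} {rmax : ℝ}
    (hP : IsKernel P) (hπ : IsPolicy π) (hμ : IsDist μ)
    (hr : ∀ s a s', |r s a s'| ≤ rmax) :
    |expReward P π r μ| ≤ rmax := by
  refine abs_weighted_le hμ.1 hμ.2 fun s => ?_
  refine abs_weighted_le (hπ s).1 (hπ s).2 fun a => ?_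
  exact abs_weighted_le (hP s a).1 (hP s a).2 (hr s a)

lemma expReward_diff {P : S → A → S → ℝ} {π π' : S → A → ℝ} {r : S → A → S → ℝ}
    {μ μ' : S → ℝ} {rmax δ₂ : ℝ}
    (hP : IsKernel P) (hπ : IsPolicy π) (hπ' : IsPolicy π') (hμ : IsDist μ)
    (hrmax : 0 ≤ rmax)
    (hr : ∀ s a s', |r s a s'| ≤ rmax)
    (hδ2 : ∀ s, ∑ a, |π' s a - π s a| ≤ 2 * δ₂) :
    |expReward P π' r μ' - expReward P π r μ| ≤
      rmax * (∑ s, |μ' s - μ s|) + rmax * (2 * δ₂) := by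
  set R := fun s a => ∑ s', P s a s' * r s a s' with hRdef
  have hR : ∀ s a, |R s a| ≤ rmax := fun s a =>
    abs_weighted_le (hP s a).1 (hP s a).2 (hr s a)
  have hY' : ∀ s, |∑ a, π' s a * R s a| ≤ rmax := fun s =>
    abs_weighted_le (hπ' s).1 (hπ' s).2 (hR s)
  have key : expReward P π' r μ' - expReward P π r μ =
      ∑ s, ((μ' s - μ s) * ∑ a, π' s a * R s a + μ s * ∑ a, (π' s a - π s a) * R s a) := by
    rw [expReward, expReward, ← Finset.sum_sub_distrib]
    refine Finset.sum_congr rfl fun x _ => ?_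
    have h2 : ∑ a, (π' x a - π x a) * R x a
        = (∑ a, π' x a * R x a) - ∑ a, π x a * R x a := by
      rw [← Finset.sum_sub_distrib]; exact Finset.sum_congr rfl fun a _ => by ring
    rw [h2]; ring
  rw [key]
  calc |∑ s, ((μ' s - μ s) * ∑ a, π' s a * R s a + μ s * ∑ a, (π' s a - π s a) * R s a)|
      ≤ ∑ s, |(μ' s - μ s) * ∑ a, π' s a * R s a + μ s * ∑ a, (π' s a - π s a) * R s a| :=
        Finset.abs_sum_le_sum_abs _ _
    _ ≤ ∑ s, (|μ' s - μ s| * rmax + μ s * (2 * δ₂ * rmax)) := by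
        refine Finset.sum_le_sum fun x _ => ?_
        refine le_trans (abs_add_le _ _) (add_le_add ?_ ?_)
        · rw [abs_mul]
          exact mul_le_mul_of_nonneg_left (hY' x) (abs_nonneg _)
        · rw [abs_mul, abs_of_nonneg (hμ.1 x)]
          refine mul_le_mul_of_nonneg_left ?_ (hμ.1 x)
          calc |∑ a, (π' x a - π x a) * R x a| ≤ ∑ a, |π' x a - π x a| * rmax := by
                refine le_trans (Finset.abs_sum_le_sum_abs _ _)
                  (Finset.sum_le_sum fun a _ => ?_)
                rw [abs_mul]
                exact mul_le_mul_of_nonneg_left (hR x a) (abs_nonneg _)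
            _ = (∑ a, |π' x a - π x a|) * rmax := by rw [Finset.sum_mul]
            _ ≤ 2 * δ₂ * rmax := mul_le_mul_of_nonneg_right (hδ2 x) hrmax
    _ = rmax * (∑ s, |μ' s - μ s|) + (∑ s, μ s) * (2 * δ₂ * rmax) := by
        rw [Finset.sum_add_distrib, ← Finset.sum_mul, ← Finset.sum_mul]; ring
    _ = rmax * (∑ s, |μ' s - μ s|) + rmax * (2 * δ₂) := by rw [hμ.2]; ring

end AuxLemmas

/-- value difference bound between two policies for a state appearing
at time `t`. -/
theorem value_diff_policies [Fintype S] [Fintype A] [DecidableEq S]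
    (P : S → A → S → ℝ) (π π' : S → A → ℝ) (r : S → A → S → ℝ) (γ : ℝ)
    (rmax δ₂ : ℝ)
    (hP : IsKernel P) (hπ : IsPolicy π) (hπ' : IsPolicy π')
    (hγ0 : 0 ≤ γ) (hγ1 : γ < 1)
    (hr : ∀ s a s', |r s a s'| ≤ rmax)
    (hδ : ∀ s, (1 / 2) * ∑ a, |π' s a - π s a| ≤ δ₂) :
    ∀ (t : ℕ) (s : S),
      |Vval P π' r γ s - Vval P π r γ s| ≤
        min (2 * rmax * δ₂ * ((t : ℝ) * γ * (1 - γ) + 1) / (1 - γ) ^ 2)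
          (2 * rmax / (1 - γ)) := by
  
  intro t s
  -- basic positivity facts
  obtain ⟨a₀⟩ : Nonempty A := by
    rcases isEmpty_or_nonempty A with h | h
    · exfalso; have := (hπ s).2; simp at this
    · exact h
  have hrmax : 0 ≤ rmax := le_trans (abs_nonneg _) (hr s a₀ s)
  have hδ₂ : 0 ≤ δ₂ := by
    refine le_trans ?_ (hδ s)
    have : (0:ℝ) ≤ ∑ a, |π' s a - π s a| := Finset.sum_nonneg fun a _ => abs_nonneg _
    linarith
  have hδ2 : ∀ s, ∑ a, |π' s a - π s a| ≤ 2 * δ₂ := fun s => by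
    have := hδ s; linarith
  have h1γ : (0:ℝ) < 1 - γ := by linarith
  have hγn : ‖γ‖ < 1 := by rw [Real.norm_eq_abs, abs_of_nonneg hγ0]; exact hγ1
  set ρ : S → ℝ := fun s' => if s' = s then 1 else 0 with hρdef
  have hρ : IsDist ρ := by
    constructor
    · intro s'; dsimp [ρ]; split <;> norm_num
    · simp [ρ]
  set e : ℕ → ℝ := fun u => expReward P π r (marginal P π ρ u) with hedef
  set e' : ℕ → ℝ := fun u => expReward P π' r (marginal P π' ρ u) with he'def
  have he : ∀ u, |e u| ≤ rmax := fun u =>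
    expReward_abs_le hP hπ (isDist_marginal hP hπ hρ u) hr
  have he' : ∀ u, |e' u| ≤ rmax := fun u =>
    expReward_abs_le hP hπ' (isDist_marginal hP hπ' hρ u) hr
  have hgeo : Summable (fun u : ℕ => γ ^ u) := summable_geometric_of_lt_one hγ0 hγ1
  have hsummand : ∀ (f : ℕ → ℝ), (∀ u, |f u| ≤ rmax) →
      Summable (fun u => γ ^ u * f u) := by
    intro f hf
    refine Summable.of_norm_bounded (g := fun u => rmax * γ ^ u) (hgeo.mul_left rmax) fun u => ?_
    rw [Real.norm_eq_abs, abs_mul, abs_pow, abs_of_nonneg hγ0, mul_comm]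
    exact mul_le_mul_of_nonneg_right (hf u) (pow_nonneg hγ0 u)
  have hs : Summable (fun u => γ ^ u * e u) := hsummand e he
  have hs' : Summable (fun u => γ ^ u * e' u) := hsummand e' he'
  have hdiff : Vval P π' r γ s - Vval P π r γ s = ∑' u, γ ^ u * (e' u - e u) := by
    rw [Vval, Vval, Jret, Jret, ← Summable.tsum_sub hs' hs]
    congr 1; funext u; ring
  have hf : Summable (fun u => γ ^ u * (e' u - e u)) := by
    have := hs'.sub hs
    simpa [mul_sub] using this
  -- per-term bounds
  have hb1 : ∀ u : ℕ, |γ ^ u * (e' u - e u)| ≤ (2 * rmax * δ₂) * (((u:ℝ) + 1) * γ ^ u) := by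
    intro u
    rw [abs_mul, abs_pow, abs_of_nonneg hγ0]
    have hd : |e' u - e u| ≤ (2 * rmax * δ₂) * ((u:ℝ) + 1) := by
      have h1 := expReward_diff (μ' := marginal P π' ρ u) hP hπ hπ'
        (isDist_marginal hP hπ hρ u) hrmax hr hδ2
      have h2 := l1_marginal hP hπ hπ' hρ hδ2 u
      have h3 : rmax * (∑ x, |marginal P π' ρ u x - marginal P π ρ u x|)
          ≤ rmax * (2 * (u:ℝ) * δ₂) := mul_le_mul_of_nonneg_left h2 hrmax
      calc |e' u - e u| ≤ rmax * (∑ x, |marginal P π' ρ u x - marginal P π ρ u x|)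
            + rmax * (2 * δ₂) := h1
        _ ≤ rmax * (2 * (u:ℝ) * δ₂) + rmax * (2 * δ₂) := by linarith
        _ = (2 * rmax * δ₂) * ((u:ℝ) + 1) := by ring
    calc γ ^ u * |e' u - e u| ≤ γ ^ u * ((2 * rmax * δ₂) * ((u:ℝ) + 1)) :=
          mul_le_mul_of_nonneg_left hd (pow_nonneg hγ0 u)
      _ = (2 * rmax * δ₂) * (((u:ℝ) + 1) * γ ^ u) := by ring
  have hb2 : ∀ u : ℕ, |γ ^ u * (e' u - e u)| ≤ (2 * rmax) * γ ^ u := by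
    intro u
    rw [abs_mul, abs_pow, abs_of_nonneg hγ0]
    have : |e' u - e u| ≤ 2 * rmax := by
      calc |e' u - e u| ≤ |e' u| + |e u| := abs_sub _ _
        _ ≤ rmax + rmax := add_le_add (he' u) (he u)
        _ = 2 * rmax := by ring
    calc γ ^ u * |e' u - e u| ≤ γ ^ u * (2 * rmax) :=
          mul_le_mul_of_nonneg_left this (pow_nonneg hγ0 u)
      _ = (2 * rmax) * γ ^ u := by ring
  -- summability of the bounding series
  have hsg : Summable (fun u : ℕ => (u:ℝ) * γ ^ u) := by
    simpa using summable_pow_mul_geometric_of_norm_lt_one 1 hγn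
  have hsg1 : Summable (fun u : ℕ => ((u:ℝ) + 1) * γ ^ u) := by
    have := hsg.add hgeo
    simpa [add_mul] using this
  have ht1 : ∑' u : ℕ, ((u:ℝ) + 1) * γ ^ u = 1 / (1 - γ) ^ 2 := by
    have heq : (fun u : ℕ => ((u:ℝ) + 1) * γ ^ u)
        = fun u : ℕ => (u:ℝ) * γ ^ u + γ ^ u := by funext u; ring
    rw [heq, Summable.tsum_add hsg hgeo, tsum_coe_mul_geometric_of_norm_lt_one hγn,
      tsum_geometric_of_lt_one hγ0 hγ1]
    field_simp
    ring
  have habs : Summable (fun u => |γ ^ u * (e' u - e u)|) := hf.abs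
  have hmain : |Vval P π' r γ s - Vval P π r γ s| ≤ ∑' u, |γ ^ u * (e' u - e u)| := by
    rw [hdiff]
    have h := norm_tsum_le_tsum_norm (f := fun u => γ ^ u * (e' u - e u))
      (by simpa only [Real.norm_eq_abs] using habs)
    simpa only [Real.norm_eq_abs] using h
  refine le_min ?_ ?_
  · -- first bound
    have hB : ∑' u, |γ ^ u * (e' u - e u)| ≤ (2 * rmax * δ₂) * (1 / (1 - γ) ^ 2) := by
      calc ∑' u, |γ ^ u * (e' u - e u)|
          ≤ ∑' u : ℕ, (2 * rmax * δ₂) * (((u:ℝ) + 1) * γ ^ u) :=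
            Summable.tsum_le_tsum hb1 habs (hsg1.mul_left _)
        _ = (2 * rmax * δ₂) * ∑' u : ℕ, ((u:ℝ) + 1) * γ ^ u := tsum_mul_left
        _ = (2 * rmax * δ₂) * (1 / (1 - γ) ^ 2) := by rw [ht1]
    refine le_trans (le_trans hmain hB) ?_
    rw [mul_one_div]
    have hx : (0:ℝ) ≤ (t:ℝ) * γ * (1 - γ) := by positivity
    have hc : (0:ℝ) ≤ 2 * rmax * δ₂ := by positivity
    have hnum : 2 * rmax * δ₂ ≤ 2 * rmax * δ₂ * ((t:ℝ) * γ * (1 - γ) + 1) := by nlinarith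
    exact div_le_div_of_nonneg_right hnum (by positivity) |>.trans_eq rfl
  · -- second bound
    have hB : ∑' u, |γ ^ u * (e' u - e u)| ≤ 2 * rmax / (1 - γ) := by
      calc ∑' u, |γ ^ u * (e' u - e u)| ≤ ∑' u : ℕ, (2 * rmax) * γ ^ u :=
            Summable.tsum_le_tsum hb2 habs (hgeo.mul_left _)
        _ = (2 * rmax) * ∑' u : ℕ, γ ^ u := tsum_mul_left
        _ = 2 * rmax / (1 - γ) := by
            rw [tsum_geometric_of_lt_one hγ0 hγ1]; field_simp
    exact le_trans hmain hB
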